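/- (Core estimate of Proposition 2.8 of the paper.) Let Γ be a countable type with a graph distance 𝐝 : Γ → Γ → ℕ and constants κ > 0, d ≥ 1 such that every sphere {y : 𝐝(x,y) = r} has at most κ·(1+r)^{d−1} elements (so all balls, and hence all fattenings Y^{(n)} = {x ∈ Γ : 𝐝(x,Y) ≤ n} of nonempty finite sets Y, are finite). Let Z ⊆ Γ be nonempty, 0 < p < 1, b > 0, b̃ > 0, and 0 < b'' < min(b, 2^{−p}·b̃). Let ψ be a map from nonempty finite subsets of Γ to [0,∞) such that for every y ∈ Γ the family (ψ(Y)·exp(b·D_Z(Y)^p))_{Y ∋ y} is summable with sum at most M. Then there exists a constant C, depending only on b, b̃, b'', p, d and κ, such that for every x ∈ Γ the family indexed by pairs (n, Y) of a natural number n and a nonempty finite Y ⊆ Γ with x ∈ Y^{(n)}, with value ψ(Y)·|Y^{(n)}|·exp(−b̃·n^p)·exp(b''·D_Z(Y^{(n)})^p), is summable with sum at most C·M. -/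

import Mathlib

/-- The `n`-fattening `S^{(n)} = {x : 𝐝(x,S) ≤ n}` of a set `S ⊆ Γ`. -/
def fatten {Γ : Type*} (dist : Γ → Γ → ℕ) (S : Set Γ) (n : ℕ) : Set Γ :=
  {x : Γ | ∃ y ∈ S, dist x y ≤ n}

/-- The diameter `D(S) = max {𝐝(a,b) : a, b ∈ S}` of a set `S ⊆ Γ`. -/
noncomputable def setDiam {Γ : Type*} (dist : Γ → Γ → ℕ) (S : Set Γ) : ℕ :=
  sSup {n : ℕ | ∃ a ∈ S, ∃ b ∈ S, dist a b = n}

/-- The distance `𝐝(S,Z) = min {𝐝(a,z) : a ∈ S, z ∈ Z}` between two sets. -/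
noncomputable def setDistToSet {Γ : Type*} (dist : Γ → Γ → ℕ) (S Z : Set Γ) : ℕ :=
  sInf {n : ℕ | ∃ a ∈ S, ∃ z ∈ Z, dist a z = n}

/-- `D_Z(S) = D(S) + 𝐝(S,Z)`. -/
noncomputable def setDZ {Γ : Type*} (dist : Γ → Γ → ℕ) (Z S : Set Γ) : ℕ :=
  setDiam dist S + setDistToSet dist S Z

open Real Filter

/-- Subadditivity of `x ↦ x^p` for `0 ≤ p ≤ 1` on nonnegative reals. -/
lemma aux_rpow_add_le {p : ℝ} (hp0 : 0 ≤ p) (hp1 : p ≤ 1) {x y : ℝ} (hx : 0 ≤ x) (hy : 0 ≤ y) :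
    (x + y) ^ p ≤ x ^ p + y ^ p := by
  have h := NNReal.rpow_add_le_add_rpow x.toNNReal y.toNNReal hp0 hp1
  rw [← Real.toNNReal_add hx hy] at h
  have h2 := NNReal.coe_le_coe.2 h
  rw [NNReal.coe_add] at h2
  rw [NNReal.coe_rpow, NNReal.coe_rpow, NNReal.coe_rpow] at h2
  rwa [Real.coe_toNNReal _ hx, Real.coe_toNNReal _ hy,
    Real.coe_toNNReal _ (add_nonneg hx hy)] at h2

/-- `x^m / m! ≤ exp x` for `x ≥ 0`. -/
lemma aux_pow_div_factorial_le_exp {x : ℝ} (hx : 0 ≤ x) (m : ℕ) :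
    x ^ m / m.factorial ≤ Real.exp x := by
  refine le_trans ?_ (Real.sum_le_exp_of_nonneg hx (m + 1))
  refine Finset.single_le_sum (f := fun i => x ^ i / i.factorial) ?_ (Finset.self_mem_range_succ m)
  intro i _
  positivity

/-- Polynomials are bounded by stretched exponentials. -/
lemma aux_poly_mul_exp_bound {p : ℝ} (hp0 : 0 < p) {c : ℝ} (hc : 0 < c) (k : ℕ) :
    ∃ C : ℝ, 0 < C ∧ ∀ n : ℕ, (1 + (n : ℝ)) ^ k * Real.exp (-c * (n : ℝ) ^ p) ≤ C := by
  classical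
  set m : ℕ := ⌈(k : ℝ) / p⌉₊ with hm
  refine ⟨max 1 ((2 : ℝ) ^ k * m.factorial / c ^ m), lt_of_lt_of_le one_pos (le_max_left _ _), ?_⟩
  intro n
  rcases Nat.eq_zero_or_pos n with rfl | hn
  · simp [Real.zero_rpow hp0.ne']
  · have hn1 : (1 : ℝ) ≤ (n : ℝ) := by exact_mod_cast hn
    have hkpm : (k : ℝ) ≤ p * m := by
      have := Nat.le_ceil ((k : ℝ) / p)
      calc (k : ℝ) = p * ((k : ℝ) / p) := by field_simp
        _ ≤ p * m := by
            apply mul_le_mul_of_nonneg_left this hp0.le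
    have hnp : 0 ≤ (n : ℝ) ^ p := Real.rpow_nonneg (Nat.cast_nonneg n) p
    -- exponential lower bound
    have h1 : c ^ m * (n : ℝ) ^ k / m.factorial ≤ Real.exp (c * (n : ℝ) ^ p) := by
      refine le_trans ?_ (aux_pow_div_factorial_le_exp (by positivity) m)
      rw [mul_pow]
      have h2 : ((n : ℝ) ^ p) ^ m = (n : ℝ) ^ (p * m) := by
        rw [← Real.rpow_natCast ((n : ℝ) ^ p) m, ← Real.rpow_mul (Nat.cast_nonneg n)]
      have h3 : ((n : ℝ) : ℝ) ^ (k : ℝ) ≤ (n : ℝ) ^ (p * m) :=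
        Real.rpow_le_rpow_of_exponent_le hn1 hkpm
      rw [Real.rpow_natCast] at h3
      rw [h2]
      gcongr

    have hden : (0 : ℝ) < c ^ m * (n : ℝ) ^ k / m.factorial := by positivity
    have h4 : (1 + (n : ℝ)) ^ k ≤ 2 ^ k * (n : ℝ) ^ k := by
      rw [← mul_pow]
      exact pow_le_pow_left₀ (by positivity) (by linarith) k
    have h5 : Real.exp (-c * (n : ℝ) ^ p) = (Real.exp (c * (n : ℝ) ^ p))⁻¹ := by
      rw [← Real.exp_neg]; ring_nf
    refine le_trans ?_ (le_max_right _ _)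
    rw [h5]
    calc (1 + (n : ℝ)) ^ k * (Real.exp (c * (n : ℝ) ^ p))⁻¹
        ≤ (2 ^ k * (n : ℝ) ^ k) * (c ^ m * (n : ℝ) ^ k / m.factorial)⁻¹ := by
          apply mul_le_mul h4 (inv_anti₀ hden h1) (by positivity) (by positivity)
      _ = (2 : ℝ) ^ k * m.factorial / c ^ m := by
          have hnk : ((n : ℝ) ^ k) ≠ 0 := by positivity
          have hcm : (c : ℝ) ^ m ≠ 0 := by positivity
          have hmf : ((m.factorial : ℝ)) ≠ 0 := by positivity
          field_simp

/-- Summability of `(1+n)^k e^{-c n^p}`. -/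
lemma aux_poly_mul_exp_summable {p : ℝ} (hp0 : 0 < p) {c : ℝ} (hc : 0 < c) (k : ℕ) :
    Summable (fun n : ℕ => (1 + (n : ℝ)) ^ k * Real.exp (-c * (n : ℝ) ^ p)) := by
  obtain ⟨C, hC0, hC⟩ := aux_poly_mul_exp_bound hp0 hc (k + 2)
  have hsum : Summable (fun n : ℕ => C * (1 / (1 + (n : ℝ)) ^ 2)) := by
    apply Summable.mul_left
    have h0 : Summable (fun n : ℕ => 1 / ((n : ℝ)) ^ 2) :=
      Real.summable_one_div_nat_pow.2 (by norm_num)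
    have h1 := (summable_nat_add_iff 1).2 h0
    apply h1.congr
    intro n
    push_cast
    ring_nf
  apply Summable.of_nonneg_of_le (fun n => by positivity) _ hsum
  intro n
  have h2 : (0 : ℝ) < (1 + (n : ℝ)) ^ 2 := by positivity
  rw [mul_one_div, le_div_iff₀ h2]
  calc (1 + (n : ℝ)) ^ k * Real.exp (-c * (n : ℝ) ^ p) * (1 + (n : ℝ)) ^ 2
      = (1 + (n : ℝ)) ^ (k + 2) * Real.exp (-c * (n : ℝ) ^ p) := by rw [pow_add]; ring
    _ ≤ C := hC n

/-- Cardinality of a finite bUnion. -/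
lemma aux_ncard_biUnion_le {α β : Type*} (s : Finset α) (t : α → Set β) :
    (⋃ a ∈ s, t a).ncard ≤ ∑ a ∈ s, (t a).ncard := by
  classical
  induction s using Finset.induction_on with
  | empty => simp
  | insert a s ha ih =>
      rw [Finset.set_biUnion_insert, Finset.sum_insert ha]
      exact (Set.ncard_union_le _ _).trans (add_le_add_right ih _)
set_option maxHeartbeats 1000000 in
theorem fattening_weighted_sum_bound (p b bt b'' : ℝ) (hp0 : 0 < p) (hp1 : p < 1)
    (hb : 0 < b) (hbt : 0 < bt) (hb''0 : 0 < b'')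
    (hb'' : b'' < min b ((2 : ℝ) ^ (-p) * bt))
    (κ : ℝ) (hκ : 0 < κ) (d : ℕ) (hd : 1 ≤ d) :
    ∃ C : ℝ, 0 < C ∧
      ∀ (Γ : Type) [Countable Γ], ∀ (dist : Γ → Γ → ℕ),
        (∀ x y : Γ, dist x y = 0 ↔ x = y) →
        (∀ x y : Γ, dist x y = dist y x) →
        (∀ x y z : Γ, dist x z ≤ dist x y + dist y z) →
        (∀ (x : Γ) (r : ℕ), {y : Γ | dist x y = r}.Finite ∧
          ({y : Γ | dist x y = r}.ncard : ℝ) ≤ κ * (1 + (r : ℝ)) ^ (d - 1)) →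
        ∀ (Z : Set Γ), Z.Nonempty →
        ∀ (ψ : Finset Γ → ℝ), (∀ Y : Finset Γ, 0 ≤ ψ Y) →
        ∀ M : ℝ,
          (∀ y : Γ,
            Summable (fun Y : {Y : Finset Γ // y ∈ Y} =>
              ψ Y.1 * Real.exp (b * (setDZ dist Z (↑Y.1) : ℝ) ^ p)) ∧
            ∑' Y : {Y : Finset Γ // y ∈ Y},
              ψ Y.1 * Real.exp (b * (setDZ dist Z (↑Y.1) : ℝ) ^ p) ≤ M) →
          ∀ x : Γ,
            Summable (fun q : {q : ℕ × Finset Γ // q.2.Nonempty ∧ x ∈ fatten dist (↑q.2) q.1} =>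
              ψ q.1.2 * ((fatten dist (↑q.1.2) q.1.1).ncard : ℝ) *
                Real.exp (-bt * (q.1.1 : ℝ) ^ p) *
                Real.exp (b'' * (setDZ dist Z (fatten dist (↑q.1.2) q.1.1) : ℝ) ^ p)) ∧
            ∑' q : {q : ℕ × Finset Γ // q.2.Nonempty ∧ x ∈ fatten dist (↑q.2) q.1},
              ψ q.1.2 * ((fatten dist (↑q.1.2) q.1.1).ncard : ℝ) *
                Real.exp (-bt * (q.1.1 : ℝ) ^ p) *
                Real.exp (b'' * (setDZ dist Z (fatten dist (↑q.1.2) q.1.1) : ℝ) ^ p) ≤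
              C * M := by
  classical
  obtain ⟨d, rfl⟩ : ∃ d', d = d' + 1 := ⟨d - 1, by omega⟩
  have hpowd : ∀ t : ℝ, t ^ (d + 1) = t ^ (d + 1 - 1) * t := fun t => pow_succ t d
  have hbb : b'' < b := lt_of_lt_of_le hb'' (min_le_left _ _)
  have hbtb : b'' < (2 : ℝ) ^ (-p) * bt := lt_of_lt_of_le hb'' (min_le_right _ _)
  set c₁ : ℝ := b - b'' with hc₁def
  have hc₁ : 0 < c₁ := by simp only [hc₁def]; linarith
  have h2p : (0 : ℝ) < (2 : ℝ) ^ p := Real.rpow_pos_of_pos two_pos p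
  set c₂ : ℝ := bt - (2 : ℝ) ^ p * b'' with hc₂def
  have hc₂ : 0 < c₂ := by
    have h22 : (2 : ℝ) ^ p * ((2 : ℝ) ^ (-p) * bt) = bt := by
      rw [← mul_assoc, ← Real.rpow_add two_pos]; simp
    have h := mul_lt_mul_of_pos_left hbtb h2p
    rw [h22] at h
    simp only [hc₂def]; linarith
  obtain ⟨C₁, hC₁0, hC₁⟩ := aux_poly_mul_exp_bound hp0 hc₁ (d + 1)
  have hS₀sum : Summable (fun n : ℕ => (1 + (n : ℝ)) ^ (2 * (d + 1)) * Real.exp (-c₂ * (n : ℝ) ^ p)) :=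
    aux_poly_mul_exp_summable hp0 hc₂ (2 * (d + 1))
  set S₀ : ℝ := ∑' n : ℕ, (1 + (n : ℝ)) ^ (2 * (d + 1)) * Real.exp (-c₂ * (n : ℝ) ^ p) with hS₀def
  have hS₀1 : (1 : ℝ) ≤ S₀ := by
    have h0 := hS₀sum.le_tsum 0 (fun j _ => by positivity)
    have h1 : ((1 : ℝ) + ((0 : ℕ) : ℝ)) ^ (2 * (d + 1)) * Real.exp (-c₂ * ((0 : ℕ) : ℝ) ^ p) = 1 := by
      simp [Real.zero_rpow hp0.ne']
    exact le_trans (le_of_eq h1.symm) h0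
  refine ⟨C₁ * κ ^ 3 * S₀, mul_pos (mul_pos hC₁0 (pow_pos hκ 3)) (lt_of_lt_of_le one_pos hS₀1), ?_⟩
  intro Γ _ dist hzero hsymm htri hball Z hZ ψ hψ M hM x
  have hM0 : 0 ≤ M := by
    obtain ⟨z₀, hz₀⟩ := hZ
    refine le_trans (tsum_nonneg ?_) (hM z₀).2
    intro Y; exact mul_nonneg (hψ _) (Real.exp_nonneg _)
  -- ball finiteness and cardinality
  have ballFin : ∀ (a : Γ) (n : ℕ), {y : Γ | dist a y ≤ n}.Finite := by
    intro a n
    refine Set.Finite.subset (Set.Finite.biUnion (Finset.range (n + 1)).finite_toSet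
      (fun r _ => (hball a r).1)) ?_
    intro y hy
    simp only [Set.mem_iUnion, Finset.mem_coe, Finset.mem_range, Set.mem_setOf_eq]
    exact ⟨dist a y, Nat.lt_succ_of_le hy, rfl⟩
  have ballCard : ∀ (a : Γ) (n : ℕ), ({y : Γ | dist a y ≤ n}.ncard : ℝ) ≤ κ * (1 + (n : ℝ)) ^ (d + 1) := by
    intro a n
    have hsub : {y : Γ | dist a y ≤ n} ⊆ ⋃ r ∈ Finset.range (n + 1), {y : Γ | dist a y = r} := by
      intro y hy
      simp only [Set.mem_iUnion, Finset.mem_range, Set.mem_setOf_eq]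
      exact ⟨dist a y, Nat.lt_succ_of_le hy, rfl⟩
    have hfin : (⋃ r ∈ Finset.range (n + 1), {y : Γ | dist a y = r}).Finite :=
      Set.Finite.biUnion (Finset.range (n + 1)).finite_toSet (fun r _ => (hball a r).1)
    have h1 : {y : Γ | dist a y ≤ n}.ncard ≤
        ∑ r ∈ Finset.range (n + 1), {y : Γ | dist a y = r}.ncard :=
      le_trans (Set.ncard_le_ncard hsub hfin) (aux_ncard_biUnion_le _ _)
    have h2 : ({y : Γ | dist a y ≤ n}.ncard : ℝ) ≤
        ∑ r ∈ Finset.range (n + 1), ({y : Γ | dist a y = r}.ncard : ℝ) := by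
      push_cast
      exact_mod_cast h1
    refine le_trans h2 ?_
    have h3 : ∀ r ∈ Finset.range (n + 1),
        ({y : Γ | dist a y = r}.ncard : ℝ) ≤ κ * (1 + (n : ℝ)) ^ (d + 1 - 1) := by
      intro r hr
      refine le_trans (hball a r).2 ?_
      have hrn : (r : ℝ) ≤ (n : ℝ) := by
        exact_mod_cast Nat.lt_succ_iff.mp (Finset.mem_range.mp hr)
      have h5 : (1 : ℝ) + (r : ℝ) ≤ 1 + (n : ℝ) := by linarith
      exact mul_le_mul_of_nonneg_left (pow_le_pow_left₀ (by positivity) h5 _) hκ.le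
    refine le_trans (Finset.sum_le_sum h3) ?_
    rw [Finset.sum_const, Finset.card_range, nsmul_eq_mul]
    refine le_of_eq ?_
    rw [hpowd]
    push_cast
    ring
  -- fattening facts
  have hYsubfat : ∀ (Y : Finset Γ) (n : ℕ), (↑Y : Set Γ) ⊆ fatten dist ↑Y n := by
    intro Y n y hy
    exact ⟨y, hy, le_trans (le_of_eq ((hzero y y).2 rfl)) (Nat.zero_le n)⟩
  have fatCard : ∀ (Y : Finset Γ) (n : ℕ),
      ((fatten dist ↑Y n).ncard : ℝ) ≤ (Y.card : ℝ) * (κ * (1 + (n : ℝ)) ^ (d + 1)) := by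
    intro Y n
    have hsub : fatten dist ↑Y n ⊆ ⋃ y ∈ Y, {z : Γ | dist y z ≤ n} := by
      rintro z ⟨y, hyY, hzy⟩
      simp only [Set.mem_iUnion, Set.mem_setOf_eq]
      exact ⟨y, hyY, by rw [hsymm]; exact hzy⟩
    have h1 : (fatten dist ↑Y n).ncard ≤ ∑ y ∈ Y, {z : Γ | dist y z ≤ n}.ncard :=
      le_trans (Set.ncard_le_ncard hsub
        (Set.Finite.biUnion Y.finite_toSet (fun y _ => ballFin y n)))
        (aux_ncard_biUnion_le _ _)
    calc ((fatten dist ↑Y n).ncard : ℝ) ≤ ∑ y ∈ Y, ({z : Γ | dist y z ≤ n}.ncard : ℝ) := by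
          push_cast
          exact_mod_cast h1
      _ ≤ ∑ _y ∈ Y, κ * (1 + (n : ℝ)) ^ (d + 1) := Finset.sum_le_sum (fun y _ => ballCard y n)
      _ = (Y.card : ℝ) * (κ * (1 + (n : ℝ)) ^ (d + 1)) := by rw [Finset.sum_const, nsmul_eq_mul]
  have dist_le_diam : ∀ (Y : Finset Γ), ∀ a ∈ Y, ∀ b2 ∈ Y,
      dist a b2 ≤ setDiam dist (↑Y : Set Γ) := by
    intro Y a ha b2 hb2
    have hfin : {n : ℕ | ∃ u ∈ (↑Y : Set Γ), ∃ v ∈ (↑Y : Set Γ), dist u v = n}.Finite := by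
      refine Set.Finite.subset (Set.Finite.image (fun q : Γ × Γ => dist q.1 q.2)
        ((Y.finite_toSet).prod Y.finite_toSet)) ?_
      rintro n ⟨u, hu, v, hv, rfl⟩
      exact ⟨(u, v), ⟨hu, hv⟩, rfl⟩
    exact le_csSup hfin.bddAbove ⟨a, ha, b2, hb2, rfl⟩
  have cardY : ∀ Y : Finset Γ, Y.Nonempty →
      (Y.card : ℝ) ≤ κ * (1 + (setDiam dist (↑Y : Set Γ) : ℝ)) ^ (d + 1) := by
    intro Y hY
    obtain ⟨y₀, hy₀⟩ := hY
    have hsub : (↑Y : Set Γ) ⊆ {y : Γ | dist y₀ y ≤ setDiam dist (↑Y : Set Γ)} := by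
      intro y hy
      exact dist_le_diam Y y₀ hy₀ y hy
    have h1 : (↑Y : Set Γ).ncard ≤ {y : Γ | dist y₀ y ≤ setDiam dist (↑Y : Set Γ)}.ncard :=
      Set.ncard_le_ncard hsub (ballFin _ _)
    rw [← Set.ncard_coe_finset Y]
    calc (((↑Y : Set Γ).ncard : ℕ) : ℝ)
        ≤ ({y : Γ | dist y₀ y ≤ setDiam dist (↑Y : Set Γ)}.ncard : ℝ) := by exact_mod_cast h1
      _ ≤ κ * (1 + (setDiam dist (↑Y : Set Γ) : ℝ)) ^ (d + 1) := ballCard y₀ _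
  have diamDZ : ∀ Y : Finset Γ, setDiam dist (↑Y : Set Γ) ≤ setDZ dist Z ↑Y :=
    fun Y => Nat.le_add_right _ _
  have DZfat_le : ∀ (Y : Finset Γ) (n : ℕ), Y.Nonempty →
      setDZ dist Z (fatten dist ↑Y n) ≤ setDZ dist Z ↑Y + 2 * n := by
    intro Y n hY
    obtain ⟨y₀, hy₀⟩ := hY
    obtain ⟨z₀, hz₀⟩ := hZ
    have hdiam : setDiam dist (fatten dist ↑Y n) ≤ setDiam dist (↑Y : Set Γ) + 2 * n := by
      apply csSup_le
      · exact ⟨0, y₀, hYsubfat Y n hy₀, y₀, hYsubfat Y n hy₀, (hzero y₀ y₀).2 rfl⟩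
      rintro m ⟨a, ⟨ya, hya, haya⟩, b2, ⟨yb, hyb, hbyb⟩, rfl⟩
      have h1 : dist a b2 ≤ dist a ya + dist ya b2 := htri _ _ _
      have h1' : dist ya b2 ≤ dist ya yb + dist yb b2 := htri _ _ _
      have h2 : dist ya yb ≤ setDiam dist (↑Y : Set Γ) := dist_le_diam Y ya hya yb hyb
      have h3 : dist yb b2 ≤ n := by rw [hsymm]; exact hbyb
      omega
    have hdist : setDistToSet dist (fatten dist ↑Y n) Z ≤ setDistToSet dist (↑Y : Set Γ) Z := by
      have hmem : setDistToSet dist (↑Y : Set Γ) Z ∈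
          {m : ℕ | ∃ a ∈ (↑Y : Set Γ), ∃ z ∈ Z, dist a z = m} :=
        Nat.sInf_mem ⟨dist y₀ z₀, y₀, hy₀, z₀, hz₀, rfl⟩
      obtain ⟨a, ha, z, hz, hd'⟩ := hmem
      exact Nat.sInf_le ⟨a, hYsubfat Y n ha, z, hz, hd'⟩
    unfold setDZ
    omega
  -- the comparison family on a sigma type
  have hfinBall : ∀ n : ℕ, Finite {y : Γ // dist x y ≤ n} := fun n => (ballFin x n).to_subtype
  set A : ℕ → ℝ :=
    fun n => C₁ * κ ^ 2 * ((1 + (n : ℝ)) ^ (d + 1) * Real.exp (-c₂ * (n : ℝ) ^ p)) with hAdef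
  set h : Finset Γ → ℝ :=
    fun Y => ψ Y * Real.exp (b * (setDZ dist Z (↑Y : Set Γ) : ℝ) ^ p) with hhdef
  have hA0 : ∀ n, 0 ≤ A n :=
    fun n => by simp only [hAdef]; exact mul_nonneg (mul_nonneg hC₁0.le (by positivity)) (by positivity)
  have hh0 : ∀ Y, 0 ≤ h Y := fun Y => by
    simp only [hhdef]; exact mul_nonneg (hψ Y) (Real.exp_nonneg _)
  have hfib : ∀ n : ℕ, ∀ y : {y : Γ // dist x y ≤ n},
      Summable (fun Y : {Y : Finset Γ // y.1 ∈ Y} => A n * h Y.1) :=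
    fun n y => by
      have := ((hM y.1).1).mul_left (A n)
      refine this.congr fun Y => ?_
      simp only [hhdef]
  have hfibsum : ∀ n : ℕ,
      Summable (fun yY : Σ y : {y : Γ // dist x y ≤ n}, {Y : Finset Γ // y.1 ∈ Y} =>
        A n * h yY.2.1) := by
    intro n
    haveI := hfinBall n
    exact (summable_sigma_of_nonneg (fun yY => mul_nonneg (hA0 n) (hh0 _))).2
      ⟨fun y => hfib n y, Summable.of_finite⟩
  have hfibbound : ∀ n : ℕ,
      ∑' yY : (Σ y : {y : Γ // dist x y ≤ n}, {Y : Finset Γ // y.1 ∈ Y}), A n * h yY.2.1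
        ≤ κ * (1 + (n : ℝ)) ^ (d + 1) * (A n * M) := by
    intro n
    haveI := hfinBall n
    rw [Summable.tsum_sigma (hfibsum n)]
    have h1 : ∀ y : {y : Γ // dist x y ≤ n},
        ∑' Y : {Y : Finset Γ // y.1 ∈ Y}, A n * h Y.1 ≤ A n * M := by
      intro y
      rw [tsum_mul_left]
      refine mul_le_mul_of_nonneg_left (le_trans (le_of_eq (tsum_congr fun Y => ?_)) (hM y.1).2)
        (hA0 n)
      simp only [hhdef]
    calc ∑' y : {y : Γ // dist x y ≤ n}, ∑' Y : {Y : Finset Γ // y.1 ∈ Y}, A n * h Y.1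
        ≤ ∑' _y : {y : Γ // dist x y ≤ n}, A n * M :=
          Summable.tsum_le_tsum h1 Summable.of_finite Summable.of_finite
      _ = (Nat.card {y : Γ // dist x y ≤ n} : ℝ) * (A n * M) := by
          rw [tsum_const, nsmul_eq_mul]
      _ ≤ κ * (1 + (n : ℝ)) ^ (d + 1) * (A n * M) := by
          refine mul_le_mul_of_nonneg_right ?_ (mul_nonneg (hA0 n) hM0)
          have hcard : Nat.card {y : Γ // dist x y ≤ n} = {y : Γ | dist x y ≤ n}.ncard :=
            Nat.card_coe_set_eq _
          rw [hcard]
          exact ballCard x n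
  have hBsum : Summable (fun n : ℕ => κ * (1 + (n : ℝ)) ^ (d + 1) * (A n * M)) := by
    have h1 := hS₀sum.mul_left (κ * (C₁ * κ ^ 2) * M)
    apply h1.congr
    intro n
    simp only [hAdef]
    show κ * (C₁ * κ ^ 2) * M * ((1 + (n : ℝ)) ^ (2 * (d + 1)) * Real.exp (-c₂ * (n : ℝ) ^ p))
      = κ * (1 + (n : ℝ)) ^ (d + 1) *
        ((C₁ * κ ^ 2 * ((1 + (n : ℝ)) ^ (d + 1) * Real.exp (-c₂ * (n : ℝ) ^ p))) * M)
    rw [two_mul, pow_add]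
    ring
  have hGsum : Summable (fun t : Σ n : ℕ, Σ y : {y : Γ // dist x y ≤ n},
      {Y : Finset Γ // y.1 ∈ Y} => A t.1 * h t.2.2.1) := by
    refine (summable_sigma_of_nonneg (fun t => mul_nonneg (hA0 _) (hh0 _))).2
      ⟨fun n => hfibsum n, ?_⟩
    exact Summable.of_nonneg_of_le
      (fun n => tsum_nonneg (fun yY => mul_nonneg (hA0 _) (hh0 _))) hfibbound hBsum
  have hGtsum : ∑' t : (Σ n : ℕ, Σ y : {y : Γ // dist x y ≤ n}, {Y : Finset Γ // y.1 ∈ Y}),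
      A t.1 * h t.2.2.1 ≤ C₁ * κ ^ 3 * S₀ * M := by
    rw [Summable.tsum_sigma hGsum]
    have h2 : ∑' n : ℕ, ∑' yY : (Σ y : {y : Γ // dist x y ≤ n}, {Y : Finset Γ // y.1 ∈ Y}),
        A n * h yY.2.1 ≤ ∑' n : ℕ, κ * (1 + (n : ℝ)) ^ (d + 1) * (A n * M) :=
      Summable.tsum_le_tsum hfibbound
        (((summable_sigma_of_nonneg (fun t => mul_nonneg (hA0 _) (hh0 _))).1 hGsum).2) hBsum
    refine le_trans h2 (le_of_eq ?_)
    have h3 : ∀ n : ℕ, κ * (1 + (n : ℝ)) ^ (d + 1) * (A n * M) =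
        C₁ * κ ^ 3 * M * ((1 + (n : ℝ)) ^ (2 * (d + 1)) * Real.exp (-c₂ * (n : ℝ) ^ p)) := by
      intro n
      simp only [hAdef]
      show κ * (1 + (n : ℝ)) ^ (d + 1) *
          ((C₁ * κ ^ 2 * ((1 + (n : ℝ)) ^ (d + 1) * Real.exp (-c₂ * (n : ℝ) ^ p))) * M) = _
      rw [two_mul, pow_add]
      ring
    rw [tsum_congr h3, tsum_mul_left, ← hS₀def]
    ring
  -- the injection from the index set into the sigma type
  have hex : ∀ q : {q : ℕ × Finset Γ // q.2.Nonempty ∧ x ∈ fatten dist (↑q.2) q.1},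
      ∃ y, y ∈ q.1.2 ∧ dist x y ≤ q.1.1 := by
    rintro ⟨⟨n, Y⟩, hne, hxf⟩
    obtain ⟨y, hyY, hdxy⟩ := hxf
    exact ⟨y, hyY, hdxy⟩
  let i : {q : ℕ × Finset Γ // q.2.Nonempty ∧ x ∈ fatten dist (↑q.2) q.1} →
      (Σ n : ℕ, Σ y : {y : Γ // dist x y ≤ n}, {Y : Finset Γ // y.1 ∈ Y}) :=
    fun q => ⟨q.1.1, ⟨⟨(hex q).choose, (hex q).choose_spec.2⟩, ⟨q.1.2, (hex q).choose_spec.1⟩⟩⟩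
  have hinj : Function.Injective i := by
    intro q1 q2 hq
    apply Subtype.ext
    have h1 : q1.1.1 = q2.1.1 := congrArg Sigma.fst hq
    have h2 : q1.1.2 = q2.1.2 := congrArg
      (fun t : (Σ n : ℕ, Σ y : {y : Γ // dist x y ≤ n}, {Y : Finset Γ // y.1 ∈ Y}) =>
        t.2.2.1) hq
    exact Prod.ext h1 h2
  -- the pointwise bound
  have hpoint : ∀ q : {q : ℕ × Finset Γ // q.2.Nonempty ∧ x ∈ fatten dist (↑q.2) q.1},
      ψ q.1.2 * ((fatten dist (↑q.1.2) q.1.1).ncard : ℝ) *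
        Real.exp (-bt * (q.1.1 : ℝ) ^ p) *
        Real.exp (b'' * (setDZ dist Z (fatten dist (↑q.1.2) q.1.1) : ℝ) ^ p)
      ≤ A q.1.1 * h q.1.2 := by
    rintro ⟨⟨n, Y⟩, hYne, hxf⟩
    dsimp only
    set m : ℕ := setDZ dist Z (↑Y : Set Γ) with hmdef
    set mf : ℕ := setDZ dist Z (fatten dist (↑Y : Set Γ) n) with hmfdef
    have hm : (mf : ℝ) ≤ (m : ℝ) + 2 * (n : ℝ) := by
      have := DZfat_le Y n hYne
      rw [← hmdef, ← hmfdef] at this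
      push_cast
      exact_mod_cast this
    have hstep1 : Real.exp (b'' * (mf : ℝ) ^ p) ≤
        Real.exp (b'' * (m : ℝ) ^ p) * Real.exp (b'' * ((2 : ℝ) ^ p * (n : ℝ) ^ p)) := by
      rw [← Real.exp_add]
      apply Real.exp_le_exp.2
      have h1 : ((mf : ℝ)) ^ p ≤ ((m : ℝ) + 2 * (n : ℝ)) ^ p :=
        Real.rpow_le_rpow (Nat.cast_nonneg _) hm hp0.le
      have h2 : ((m : ℝ) + 2 * (n : ℝ)) ^ p ≤ (m : ℝ) ^ p + (2 * (n : ℝ)) ^ p :=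
        aux_rpow_add_le hp0.le hp1.le (Nat.cast_nonneg _) (by positivity)
      have h3 : (2 * (n : ℝ)) ^ p = (2 : ℝ) ^ p * (n : ℝ) ^ p :=
        Real.mul_rpow (by norm_num) (Nat.cast_nonneg _)
      have h4 : ((mf : ℝ)) ^ p ≤ (m : ℝ) ^ p + (2 : ℝ) ^ p * (n : ℝ) ^ p := by
        rw [← h3]
        exact h1.trans h2
      calc b'' * (mf : ℝ) ^ p ≤ b'' * ((m : ℝ) ^ p + (2 : ℝ) ^ p * (n : ℝ) ^ p) :=
            mul_le_mul_of_nonneg_left h4 hb''0.le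
        _ = b'' * (m : ℝ) ^ p + b'' * ((2 : ℝ) ^ p * (n : ℝ) ^ p) := by ring
    have hstep2 : ((fatten dist (↑Y : Set Γ) n).ncard : ℝ) ≤
        (κ * (1 + (m : ℝ)) ^ (d + 1)) * (κ * (1 + (n : ℝ)) ^ (d + 1)) := by
      refine le_trans (fatCard Y n) ?_
      refine mul_le_mul_of_nonneg_right ?_ (mul_nonneg hκ.le (by positivity))
      refine le_trans (cardY Y hYne) ?_
      have hdm : (setDiam dist (↑Y : Set Γ) : ℝ) ≤ (m : ℝ) := by
        exact_mod_cast diamDZ Y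
      have hbase : (1 : ℝ) + (setDiam dist (↑Y : Set Γ) : ℝ) ≤ 1 + (m : ℝ) := by linarith
      exact mul_le_mul_of_nonneg_left
        (pow_le_pow_left₀ (by positivity) hbase (d + 1)) hκ.le
    have hstep3 : κ * (1 + (m : ℝ)) ^ (d + 1) * Real.exp (b'' * (m : ℝ) ^ p) ≤
        κ * C₁ * Real.exp (b * (m : ℝ) ^ p) := by
      have h1 := hC₁ m
      have h2 : Real.exp (b'' * (m : ℝ) ^ p) =
          Real.exp (-c₁ * (m : ℝ) ^ p) * Real.exp (b * (m : ℝ) ^ p) := by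
        rw [← Real.exp_add]
        congr 1
        rw [hc₁def]
        ring
      calc κ * (1 + (m : ℝ)) ^ (d + 1) * Real.exp (b'' * (m : ℝ) ^ p)
          = κ * ((1 + (m : ℝ)) ^ (d + 1) * Real.exp (-c₁ * (m : ℝ) ^ p)) *
            Real.exp (b * (m : ℝ) ^ p) := by rw [h2]; ring
        _ ≤ κ * C₁ * Real.exp (b * (m : ℝ) ^ p) :=
            mul_le_mul_of_nonneg_right
              (mul_le_mul_of_nonneg_left h1 hκ.le) (Real.exp_nonneg _)
    have hstep4 : Real.exp (-bt * (n : ℝ) ^ p) * Real.exp (b'' * ((2 : ℝ) ^ p * (n : ℝ) ^ p)) =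
        Real.exp (-c₂ * (n : ℝ) ^ p) := by
      rw [← Real.exp_add]
      congr 1
      rw [hc₂def]
      ring
    calc ψ Y * ((fatten dist (↑Y : Set Γ) n).ncard : ℝ) * Real.exp (-bt * (n : ℝ) ^ p) *
          Real.exp (b'' * (mf : ℝ) ^ p)
        ≤ ψ Y * ((κ * (1 + (m : ℝ)) ^ (d + 1)) * (κ * (1 + (n : ℝ)) ^ (d + 1))) *
            Real.exp (-bt * (n : ℝ) ^ p) *
            (Real.exp (b'' * (m : ℝ) ^ p) * Real.exp (b'' * ((2 : ℝ) ^ p * (n : ℝ) ^ p))) := by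
          refine mul_le_mul ?_ hstep1 (Real.exp_nonneg _) ?_
          · exact mul_le_mul_of_nonneg_right
              (mul_le_mul_of_nonneg_left hstep2 (hψ Y)) (Real.exp_nonneg _)
          · have : 0 ≤ ψ Y * ((κ * (1 + (m : ℝ)) ^ (d + 1)) * (κ * (1 + (n : ℝ)) ^ (d + 1))) :=
              mul_nonneg (hψ Y) (mul_nonneg (mul_nonneg hκ.le (by positivity))
                (mul_nonneg hκ.le (by positivity)))
            exact mul_nonneg this (Real.exp_nonneg _)
      _ = (κ * (1 + (m : ℝ)) ^ (d + 1) * Real.exp (b'' * (m : ℝ) ^ p)) *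
            (ψ Y * (κ * (1 + (n : ℝ)) ^ (d + 1))) *
            (Real.exp (-bt * (n : ℝ) ^ p) *
              Real.exp (b'' * ((2 : ℝ) ^ p * (n : ℝ) ^ p))) := by ring
      _ ≤ (κ * C₁ * Real.exp (b * (m : ℝ) ^ p)) *
            (ψ Y * (κ * (1 + (n : ℝ)) ^ (d + 1))) *
            (Real.exp (-bt * (n : ℝ) ^ p) *
              Real.exp (b'' * ((2 : ℝ) ^ p * (n : ℝ) ^ p))) := by
          refine mul_le_mul_of_nonneg_right
            (mul_le_mul_of_nonneg_right hstep3
              (mul_nonneg (hψ Y) (mul_nonneg hκ.le (by positivity)))) (by positivity)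
      _ = (κ * C₁ * Real.exp (b * (m : ℝ) ^ p)) *
            (ψ Y * (κ * (1 + (n : ℝ)) ^ (d + 1))) * Real.exp (-c₂ * (n : ℝ) ^ p) := by
          rw [hstep4]
      _ = A n * h Y := by
          simp only [hAdef, hhdef, ← hmdef]
          ring
  have hF0 : ∀ q : {q : ℕ × Finset Γ // q.2.Nonempty ∧ x ∈ fatten dist (↑q.2) q.1},
      0 ≤ ψ q.1.2 * ((fatten dist (↑q.1.2) q.1.1).ncard : ℝ) *
        Real.exp (-bt * (q.1.1 : ℝ) ^ p) *
        Real.exp (b'' * (setDZ dist Z (fatten dist (↑q.1.2) q.1.1) : ℝ) ^ p) := by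
    intro q
    have h0 : 0 ≤ ψ q.1.2 := hψ _
    positivity
  have hcomp : ∀ q : {q : ℕ × Finset Γ // q.2.Nonempty ∧ x ∈ fatten dist (↑q.2) q.1},
      ((fun t : (Σ n : ℕ, Σ y : {y : Γ // dist x y ≤ n}, {Y : Finset Γ // y.1 ∈ Y}) =>
        A t.1 * h t.2.2.1) ∘ i) q = A q.1.1 * h q.1.2 := fun q => rfl
  have hGi : Summable (fun q : {q : ℕ × Finset Γ // q.2.Nonempty ∧ x ∈ fatten dist (↑q.2) q.1} =>
      A q.1.1 * h q.1.2) := (hGsum.comp_injective hinj).congr hcomp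
  have hFsum : Summable (fun q : {q : ℕ × Finset Γ // q.2.Nonempty ∧ x ∈ fatten dist (↑q.2) q.1} =>
      ψ q.1.2 * ((fatten dist (↑q.1.2) q.1.1).ncard : ℝ) *
        Real.exp (-bt * (q.1.1 : ℝ) ^ p) *
        Real.exp (b'' * (setDZ dist Z (fatten dist (↑q.1.2) q.1.1) : ℝ) ^ p)) :=
    Summable.of_nonneg_of_le hF0 hpoint hGi
  refine ⟨hFsum, ?_⟩
  refine le_trans (Summable.tsum_le_tsum_of_inj
    (g := fun t : (Σ n : ℕ, Σ y : {y : Γ // dist x y ≤ n}, {Y : Finset Γ // y.1 ∈ Y}) =>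
      A t.1 * h t.2.2.1)
    i hinj (fun t _ => mul_nonneg (hA0 _) (hh0 _))
    (fun q => le_trans (hpoint q) (le_of_eq (hcomp q).symm)) hFsum hGsum) ?_
  exact hGtsum
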